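/- Let f : {0,1}³ → {0,1} be an elementary cellular automaton local rule with f(0,0,0) = 0, and set c₇ = f(1,1,1), S₂ = f(1,1,0)+f(1,0,1)+f(0,1,1), S₁ = f(1,0,0)+f(0,1,0)+f(0,0,1). If c₇ − S₂ + S₁ = 0 and S₂ ≥ 2S₁, then for every λ ∈ (0,1) the mean-field fixed-point equation a = λ·Σ_{(z₁,z₂,z₃)∈{0,1}³ : f(z₁,z₂,z₃)=1} Π_{k=1}^{3} (z_k·a + (1−z_k)·(1−a)) has a = 0 as its unique solution in [0,1]. -/
import Mathlib


/-- Real value of a binary cell. -/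
def bitR (b : Bool) : ℝ := (b.toNat : ℝ)

/-- The mean-field sum `Σ_{f(z)=1} Π_{k=1}^{3} (z_k·a + (1-z_k)·(1-a))`. -/
noncomputable def mfSum (f : Bool → Bool → Bool → Bool) (a : ℝ) : ℝ :=
  ∑ z : Bool × Bool × Bool,
    if f z.1 z.2.1 z.2.2 = true then
      (bitR z.1 * a + (1 - bitR z.1) * (1 - a)) *
        ((bitR z.2.1 * a + (1 - bitR z.2.1) * (1 - a)) *
          (bitR z.2.2 * a + (1 - bitR z.2.2) * (1 - a)))
    else 0

/-- `c₇ = f(1,1,1)`. -/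
def digit7 (f : Bool → Bool → Bool → Bool) : ℕ := (f true true true).toNat

/-- `S₂ = f(1,1,0)+f(1,0,1)+f(0,1,1)`. -/
def sum2 (f : Bool → Bool → Bool → Bool) : ℕ :=
  (f true true false).toNat + (f true false true).toNat + (f false true true).toNat

/-- `S₁ = f(1,0,0)+f(0,1,0)+f(0,0,1)`. -/
def sum1 (f : Bool → Bool → Bool → Bool) : ℕ :=
  (f true false false).toNat + (f false true false).toNat + (f false false true).toNat

private lemma ite_toNat (b : Bool) (x : ℝ) :
    (if b = true then x else 0) = (b.toNat : ℝ) * x := by cases b <;> simp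

private lemma mfSum_eq (f : Bool → Bool → Bool → Bool) (a : ℝ) :
    mfSum f a = ((f false false false).toNat : ℝ) * (1-a)^3
      + (sum1 f : ℝ) * (a * (1-a)^2) + (sum2 f : ℝ) * (a^2 * (1-a))
      + (digit7 f : ℝ) * a^3 := by
  simp only [mfSum, Fintype.sum_prod_type, Fintype.sum_bool]
  simp only [ite_toNat, bitR, Bool.toNat_true, Bool.toNat_false]
  simp only [sum1, sum2, digit7, Nat.cast_add]
  push_cast
  ring

theorem stmt10 (f : Bool → Bool → Bool → Bool) (hf : f false false false = false)
    (hc : (digit7 f : ℤ) - (sum2 f : ℤ) + (sum1 f : ℤ) = 0)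
    (hS : sum2 f ≥ 2 * sum1 f) :
    ∀ l ∈ Set.Ioo (0:ℝ) 1,
      {a : ℝ | a ∈ Set.Icc (0:ℝ) 1 ∧ a = l * mfSum f a} = {0} := by
  rintro l ⟨hl0, hl1⟩
  have hc7 : (digit7 f : ℝ) = (sum2 f : ℝ) - (sum1 f : ℝ) := by
    have h : (digit7 f : ℝ) - (sum2 f : ℝ) + (sum1 f : ℝ) = 0 := by exact_mod_cast hc
    linarith
  have hc7le : (digit7 f : ℝ) ≤ 1 := by
    have : digit7 f ≤ 1 := Bool.toNat_le _
    exact_mod_cast this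
  have hSr : (sum2 f : ℝ) ≥ 2 * (sum1 f : ℝ) := by exact_mod_cast hS
  have hS1 : (0:ℝ) ≤ (sum1 f : ℝ) := Nat.cast_nonneg _
  ext a
  simp only [Set.mem_setOf_eq, Set.mem_Icc, Set.mem_singleton_iff]
  constructor
  · rintro ⟨⟨ha0, ha1⟩, heq⟩
    rw [mfSum_eq, hf] at heq
    simp only [Bool.toNat_false, Nat.cast_zero, zero_mul, zero_add] at heq
    by_contra hne
    have ha0' : 0 < a := lt_of_le_of_ne ha0 (Ne.symm hne)
    -- mfSum = a * (S1 + a*(S2 - 2 S1)) using c7 = S2 - S1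
    have key : l * ((sum1 f : ℝ) * (a * (1-a)^2) + (sum2 f : ℝ) * (a^2 * (1-a))
        + (digit7 f : ℝ) * a^3) < a := by
      have hbr : (sum1 f : ℝ) * (1-a)^2 + (sum2 f : ℝ) * (a * (1-a))
          + (digit7 f : ℝ) * a^2 ≤ 1 := by
        rw [hc7] at hc7le ⊢
        nlinarith [sq_nonneg a, sq_nonneg (1-a), mul_nonneg hS1 (sub_nonneg.2 ha1)]
      have hgnn : (0:ℝ) ≤ (sum1 f : ℝ) * (1-a)^2 + (sum2 f : ℝ) * (a * (1-a))
          + (digit7 f : ℝ) * a^2 := by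
        have h2 : (0:ℝ) ≤ (sum2 f : ℝ) := Nat.cast_nonneg _
        have h7 : (0:ℝ) ≤ (digit7 f : ℝ) := Nat.cast_nonneg _
        have := mul_nonneg ha0 (sub_nonneg.2 ha1)
        positivity
      nlinarith [mul_le_one₀ (le_of_lt hl1) hgnn hbr, mul_pos hl0 ha0']
    linarith [heq, key]
  · rintro rfl
    refine ⟨⟨le_refl 0, zero_le_one⟩, ?_⟩
    rw [mfSum_eq, hf]
    norm_num
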